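/- The rank-at-most-two Hermitian operator D = U|ψ⟩⟨ψ|U† − V|ψ⟩⟨ψ|V† (for operators U, V on a finite-dimensional complex inner product space and a unit vector ψ) has trace norm ‖D‖₁ = √((⟨ψ|U†U|ψ⟩ + ⟨ψ|V†V|ψ⟩)² − 4|⟨ψ|V†U|ψ⟩|²). -/

import Mathlib

open Matrix
open Module

private lemma myAbsSumEq {n : ℕ} (lam : Fin n → ℝ)
    (hcard : Fintype.card {i // lam i ≠ 0} ≤ 2)
    (hle : (∑ i, lam i) ^ 2 ≤ ∑ i, (lam i) ^ 2) :
    ∑ i, |lam i| = Real.sqrt (2 * (∑ i, (lam i)^2) - (∑ i, lam i)^2) := by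
  classical
  set S : Finset (Fin n) := Finset.univ.filter (fun i => lam i ≠ 0) with hS
  have hcard' : S.card ≤ 2 := by
    rw [hS, ← Fintype.card_subtype]; exact hcard
  have h1 : ∑ i, lam i = ∑ i ∈ S, lam i := by
    rw [hS]; rw [Finset.sum_filter_ne_zero]
  have h2 : ∑ i, (lam i)^2 = ∑ i ∈ S, (lam i)^2 := by
    rw [hS, Finset.sum_filter_of_ne]; intro i _ h hi; simp [hi] at h
  have h3 : ∑ i, |lam i| = ∑ i ∈ S, |lam i| := by
    rw [hS, Finset.sum_filter_of_ne]; intro i _ h hi; exact absurd (by rw [hi]; simp) h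
  rw [h1, h2, h3]
  have key : 2 * (∑ i ∈ S, (lam i)^2) - (∑ i ∈ S, lam i)^2 = (∑ i ∈ S, |lam i|)^2 := by
    interval_cases h : S.card
    · rw [Finset.card_eq_zero.mp h]; simp
    · obtain ⟨a, ha⟩ := Finset.card_eq_one.mp h
      rw [ha]; simp [Finset.sum_singleton, sq_abs]; ring
    · obtain ⟨a, b, hab, hS2⟩ := Finset.card_eq_two.mp h
      rw [hS2, Finset.sum_pair hab, Finset.sum_pair hab, Finset.sum_pair hab]
      rw [h1, h2, hS2, Finset.sum_pair hab, Finset.sum_pair hab] at hle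
      rcases abs_cases (lam a) with ⟨ha, _⟩ | ⟨ha, _⟩ <;>
        rcases abs_cases (lam b) with ⟨hb, _⟩ | ⟨hb, _⟩ <;> nlinarith
  rw [key, Real.sqrt_sq (by positivity)]

private lemma myTraceVecMulVec {n : ℕ} (a b : Fin n → ℂ) :
    trace (vecMulVec a b) = b ⬝ᵥ a := by
  simp [trace, vecMulVec_apply, dotProduct, diag, mul_comm]

private lemma myTraceVecMulVecMul {n : ℕ} (a b c d : Fin n → ℂ) :
    trace (vecMulVec a b * vecMulVec c d) = (b ⬝ᵥ c) * (d ⬝ᵥ a) := by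
  trans ∑ i, ∑ j, (b j * c j) * (d i * a i)
  · simp only [trace, diag, mul_apply, vecMulVec_apply]
    congr 1; ext i; congr 1; ext j; ring
  · rw [Finset.sum_comm]; simp_rw [← Finset.mul_sum]
    rw [← Finset.sum_mul, dotProduct, dotProduct]

private lemma mySumEig {n : ℕ} {A : Matrix (Fin n) (Fin n) ℂ} (hA : A.IsHermitian) :
    (↑(∑ i, hA.eigenvalues i) : ℂ) = trace A := by
  conv_rhs => rw [hA.spectral_theorem, Unitary.conjStarAlgAut_apply]
  rw [trace_mul_cycle]
  rw [Unitary.coe_star_mul_self, one_mul, trace_diagonal]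
  push_cast; rfl

private lemma mySumEigSq {n : ℕ} {A : Matrix (Fin n) (Fin n) ℂ} (hA : A.IsHermitian) :
    (↑(∑ i, (hA.eigenvalues i)^2) : ℂ) = trace (A * A) := by
  set W : Matrix (Fin n) (Fin n) ℂ := ↑(hA.eigenvectorUnitary) with hWdef
  set d : Matrix (Fin n) (Fin n) ℂ := diagonal (RCLike.ofReal ∘ hA.eigenvalues) with hddef
  have hsW : star W * W = 1 := Unitary.coe_star_mul_self _
  have key : A * A = W * (d * d) * star W := by
    conv_lhs => rw [hA.spectral_theorem, Unitary.conjStarAlgAut_apply]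
    simp only [← hWdef, ← hddef, mul_assoc]
    rw [← mul_assoc (star W) W, hsW, one_mul]
  rw [key, trace_mul_cycle, ← mul_assoc, hsW, one_mul, hddef, diagonal_mul_diagonal,
    trace_diagonal]
  push_cast
  simp [sq]

private lemma myRankLeTwo {n : ℕ} (u v : Fin n → ℂ) :
    (vecMulVec u (star u) - vecMulVec v (star v)).rank ≤ 2 := by
  classical
  set D := vecMulVec u (star u) - vecMulVec v (star v) with hDdef
  have hsub : LinearMap.range D.mulVecLin ≤ Submodule.span ℂ ({u, v} : Set (Fin n → ℂ)) := by
    rintro y ⟨x, rfl⟩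
    have hx : D.mulVecLin x = (star u ⬝ᵥ x) • u - (star v ⬝ᵥ x) • v := by
      ext i
      simp only [mulVecLin_apply, hDdef, mulVec, dotProduct, Matrix.sub_apply,
        vecMulVec_apply, Pi.sub_apply, Pi.smul_apply, smul_eq_mul, Finset.sum_mul,
        Pi.star_apply, sub_mul, Finset.sum_sub_distrib]
      congr 1 <;> (congr 1; ext j; ring)
    rw [hx]
    exact sub_mem
      (Submodule.smul_mem _ _ (Submodule.subset_span (by simp)))
      (Submodule.smul_mem _ _ (Submodule.subset_span (by simp)))
  calc D.rank ≤ finrank ℂ (Submodule.span ℂ ({u, v} : Set (Fin n → ℂ))) :=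
        Submodule.finrank_mono hsub
    _ ≤ ({u, v} : Set (Fin n → ℂ)).toFinset.card := finrank_span_le_card _
    _ ≤ 2 := by
        rw [Set.toFinset_insert, Set.toFinset_singleton]
        exact (Finset.card_insert_le _ _).trans (by simp)

/-- The trace norm of a Hermitian matrix: the sum of the absolute values of its eigenvalues. -/
noncomputable def hermTraceNorm {n : ℕ} {A : Matrix (Fin n) (Fin n) ℂ}
    (hA : A.IsHermitian) : ℝ :=
  ∑ i, |hA.eigenvalues i|

theorem trace_norm_rank_two (n : ℕ) (U V : Matrix (Fin n) (Fin n) ℂ)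
    (ψ : Fin n → ℂ) (hψ : ∑ i, ‖ψ i‖ ^ 2 = 1)
    (hD : (Matrix.vecMulVec (U.mulVec ψ) (star (U.mulVec ψ))
        - Matrix.vecMulVec (V.mulVec ψ) (star (V.mulVec ψ))).IsHermitian) :
    hermTraceNorm hD =
      Real.sqrt (((∑ i, ‖U.mulVec ψ i‖ ^ 2) + ∑ i, ‖V.mulVec ψ i‖ ^ 2) ^ 2
        - 4 * ‖star (V.mulVec ψ) ⬝ᵥ U.mulVec ψ‖ ^ 2) := by
  classical
  set u := U.mulVec ψ with hu
  set v := V.mulVec ψ with hv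
  set a : ℝ := ∑ i, ‖u i‖ ^ 2 with ha
  set b : ℝ := ∑ i, ‖v i‖ ^ 2 with hb
  set c : ℂ := star v ⬝ᵥ u with hc
  set D := vecMulVec u (star u) - vecMulVec v (star v) with hDdef
  -- dot product identities
  have hdu : star u ⬝ᵥ u = (a : ℂ) := by
    rw [ha]; push_cast
    simp [dotProduct, Pi.star_apply, Complex.star_def, mul_comm, Complex.mul_conj']
  have hdv : star v ⬝ᵥ v = (b : ℂ) := by
    rw [hb]; push_cast
    simp [dotProduct, Pi.star_apply, Complex.star_def, mul_comm, Complex.mul_conj']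
  have hconj : star u ⬝ᵥ v = starRingEnd ℂ c := by
    rw [hc]; simp [dotProduct, Pi.star_apply, Complex.star_def, map_sum, mul_comm]
  -- trace identities
  have tD : trace D = ((a - b : ℝ) : ℂ) := by
    rw [hDdef, trace_sub, myTraceVecMulVec, myTraceVecMulVec, hdu, hdv]; push_cast; ring
  have tD2 : trace (D * D) = ((a^2 + b^2 - 2 * ‖c‖^2 : ℝ) : ℂ) := by
    have expand : D * D = vecMulVec u (star u) * vecMulVec u (star u)
        - vecMulVec u (star u) * vecMulVec v (star v)
        - vecMulVec v (star v) * vecMulVec u (star u)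
        + vecMulVec v (star v) * vecMulVec v (star v) := by
      rw [hDdef]; noncomm_ring
    rw [expand, trace_add, trace_sub, trace_sub,
      myTraceVecMulVecMul, myTraceVecMulVecMul, myTraceVecMulVecMul, myTraceVecMulVecMul,
      hdu, hdv, hconj, ← hc]
    have hcc : starRingEnd ℂ c * c = ((‖c‖^2 : ℝ) : ℂ) := by
      rw [mul_comm, Complex.mul_conj']; push_cast; ring
    rw [hcc, mul_comm c ((starRingEnd ℂ) c), hcc]
    push_cast; ring
  -- eigenvalue sums
  set lam := hD.eigenvalues with hlam
  have ht : ∑ i, lam i = a - b := by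
    have h := mySumEig hD
    rw [tD] at h
    rw [hlam]; exact_mod_cast h
  have hs : ∑ i, (lam i)^2 = a^2 + b^2 - 2 * ‖c‖^2 := by
    have h := mySumEigSq hD
    rw [tD2] at h
    rw [hlam]; exact_mod_cast h
  -- Cauchy-Schwarz
  have hcs : ‖c‖^2 ≤ b * a := by
    have h1 : ‖c‖ ≤ ∑ i, ‖v i‖ * ‖u i‖ := by
      rw [hc]
      refine (norm_sum_le _ _).trans ?_
      apply Finset.sum_le_sum
      intro i _
      rw [norm_mul, Pi.star_apply, norm_star]
    have h2 : (∑ i, ‖v i‖ * ‖u i‖)^2 ≤ b * a := by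
      rw [hb, ha]
      exact Finset.sum_mul_sq_le_sq_mul_sq _ _ _
    calc ‖c‖^2 ≤ (∑ i, ‖v i‖ * ‖u i‖)^2 := by
          apply pow_le_pow_left₀ (norm_nonneg _) h1
      _ ≤ b * a := h2
  have ha0 : 0 ≤ a := by rw [ha]; positivity
  have hb0 : 0 ≤ b := by rw [hb]; positivity
  -- rank bound
  have hcard : Fintype.card {i // lam i ≠ 0} ≤ 2 := by
    rw [hlam, ← Matrix.IsHermitian.rank_eq_card_non_zero_eigs hD]
    exact myRankLeTwo u v
  have hle : (∑ i, lam i) ^ 2 ≤ ∑ i, (lam i) ^ 2 := by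
    rw [ht, hs]; nlinarith
  have hfinal := myAbsSumEq lam hcard hle
  rw [show hermTraceNorm hD = ∑ i, |lam i| from rfl, hfinal, ht, hs]
  congr 1
  ring
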